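/- For every positive integer p, the p×p determinant det_{0≤i,j<p}(a_{i,j}) equals 2^{C(p,2)} Π_{j=0}^{p−1} j!, where a_{i,j} = (−1)^{(i+j)/2} H_{i+j}(0) = (i+j)!/((i+j)/2)! when i+j is even, and a_{i,j} = 0 when i+j is odd, and C(p,2) = p(p−1)/2. -/

import Mathlib

open scoped BigOperators

/-- The `k`-th physicists' Hermite polynomial, via
`H_k(z)/k! = Σ_m ((-1)^(k-m)/(k-m)!) (2z)^(2m-k)/(2m-k)!` (terms with negative
factorial arguments being zero). -/
noncomputable def hermiteH (k : ℕ) (z : ℝ) : ℝ :=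
  (k.factorial : ℝ) * ∑ m ∈ Finset.range (k+1),
    if k ≤ 2*m then ((-1:ℝ)^(k-m) / (k-m).factorial) * ((2*z)^(2*m-k) / (2*m-k).factorial)
    else 0


open Polynomial in
lemma coeff_key (n i : ℕ) :
    (((2*n).choose i : ℝ)) =
      ∑ m ∈ Finset.range (n+1), (n.choose m : ℝ) *
        (if m ≤ i then (2:ℝ)^(m - (i - m)) * (m.choose (i - m) : ℝ) else 0) := by
  have h1 : ((X + 1 : ℝ[X]))^(2*n) = (X * (X + C 2) + 1)^n := by
    have hC2 : (C (2:ℝ) : ℝ[X]) = 2 := map_ofNat C 2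
    rw [pow_mul, hC2]; ring_nf
  have h2 := congrArg (fun q : ℝ[X] => q.coeff i) (h1.trans (add_pow _ _ _))
  simp only [one_pow, mul_one] at h2
  rw [coeff_X_add_one_pow, Polynomial.finset_sum_coeff] at h2
  rw [h2]
  refine Finset.sum_congr rfl fun m hm => ?_
  rw [mul_pow, mul_comm ((X:ℝ[X])^m), ← C_eq_natCast, coeff_mul_C,
    coeff_mul_X_pow', mul_comm]
  congr 1
  split_ifs with h
  · rw [coeff_X_add_C_pow]
  · rfl


lemma entry_eq (s : ℕ) :
    (-1:ℝ)^(s/2) * hermiteH s 0 =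
      if Even s then ((s.factorial : ℝ)/((s/2).factorial)) else 0 := by
  have hsum : ∑ m ∈ Finset.range (s+1),
      (if s ≤ 2*m then ((-1:ℝ)^(s-m) / (s-m).factorial)
        * ((2*(0:ℝ))^(2*m-s) / (2*m-s).factorial) else 0)
      = if Even s then ((-1:ℝ)^(s/2) / (s/2).factorial) else 0 := by
    rw [Finset.sum_eq_single (s/2)]
    · rcases Nat.even_or_odd s with he | ho
      · have hee := Nat.even_iff.mp he
        have h1 : s ≤ 2 * (s/2) := by omega
        have h2 : 2 * (s/2) - s = 0 := by omega
        have h3 : s - s/2 = s/2 := by omega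
        simp [h1, h2, h3, he]
      · have hoo := Nat.odd_iff.mp ho
        have h1 : ¬ s ≤ 2 * (s/2) := by omega
        simp [h1, Nat.even_iff, hoo]
    · intro m hm hne
      by_cases h : s ≤ 2*m
      · have h2 : 2*m - s ≠ 0 := by
          intro h0
          exact hne (by omega)
        simp [h, h2, zero_pow h2]
      · simp [h]
    · intro h
      exact absurd (Finset.mem_range.mpr (by omega)) h
  rw [hermiteH, hsum]
  rcases Nat.even_or_odd s with he | ho
  · simp only [he, if_true]
    have h4 : ((-1:ℝ)^(s/2))*((-1:ℝ)^(s/2)) = 1 := by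
      rw [← pow_add]
      exact Even.neg_one_pow ⟨s/2, rfl⟩
    have hG : ((s/2).factorial : ℝ) ≠ 0 := Nat.cast_ne_zero.mpr (Nat.factorial_ne_zero _)
    field_simp
    have h5 : (-1:ℝ)^(s/2*2) = 1 := by rw [mul_comm, pow_mul]; simp
    linear_combination h5
  · simp [Nat.even_iff, Nat.odd_iff.mp ho]


noncomputable def Bfun (i k : ℕ) : ℝ :=
  if k ≤ i ∧ Even (i - k) then
    (i.factorial : ℝ)/(k.factorial * ((i-k)/2).factorial) else 0

lemma keysum (p i j n : ℕ) (hi : i < p) (hj : j < p) (hij : i + j = 2*n) :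
    ∑ k ∈ Finset.range p, Bfun i k * ((k.factorial : ℝ) * 2^k) * Bfun j k
      = ((2*n).factorial : ℝ) / n.factorial := by
  classical
  set F : ℕ → ℝ := fun k => Bfun i k * ((k.factorial : ℝ) * 2^k) * Bfun j k with hF
  set G : ℕ → ℝ := fun m => (n.choose m : ℝ) *
      (if m ≤ i then (2:ℝ)^(m - (i - m)) * (m.choose (i - m) : ℝ) else 0) with hG
  have hfactne : ∀ a : ℕ, ((a.factorial : ℝ)) ≠ 0 :=
    fun a => Nat.cast_ne_zero.mpr (Nat.factorial_ne_zero _)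
  -- restrict LHS
  have hL : ∑ k ∈ (Finset.range p).filter
        (fun k => k ≤ i ∧ k ≤ j ∧ Even (i - k)), F k
      = ∑ k ∈ Finset.range p, F k := by
    refine Finset.sum_filter_of_ne fun k _ hk => ?_
    by_cases h1 : k ≤ i ∧ Even (i - k)
    · by_cases h2 : k ≤ j ∧ Even (j - k)
      · exact ⟨h1.1, h2.1, h1.2⟩
      · exact absurd (by simp [hF, Bfun, h2]) hk
    · exact absurd (by simp [hF, Bfun, h1]) hk
  -- restrict RHS sum
  have hR : ∑ m ∈ (Finset.range (n+1)).filter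
        (fun m => m ≤ i ∧ i ≤ 2*m), G m
      = ∑ m ∈ Finset.range (n+1), G m := by
    refine Finset.sum_filter_of_ne fun m _ hm => ?_
    by_cases h1 : m ≤ i
    · refine ⟨h1, ?_⟩
      by_contra h2
      have : m.choose (i - m) = 0 := Nat.choose_eq_zero_of_lt (by omega)
      exact hm (by simp [hG, h1, this])
    · exact absurd (by simp [hG, h1]) hm
  -- bijection
  have hbij : ∑ k ∈ (Finset.range p).filter
        (fun k => k ≤ i ∧ k ≤ j ∧ Even (i - k)), F k
      = ∑ m ∈ (Finset.range (n+1)).filter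
        (fun m => m ≤ i ∧ i ≤ 2*m),
          ((i.factorial : ℝ) * j.factorial / n.factorial) * G m := by
    refine Finset.sum_nbij' (fun k => (i + k)/2) (fun m => 2*m - i) ?_ ?_ ?_ ?_ ?_
    · intro k hk
      simp only [Finset.mem_filter, Finset.mem_range, Nat.even_iff] at hk ⊢
      omega
    · intro m hm
      simp only [Finset.mem_filter, Finset.mem_range, Nat.even_iff] at hm ⊢
      omega
    · intro k hk
      simp only [Finset.mem_filter, Finset.mem_range, Nat.even_iff] at hk
      omega
    · intro m hm
      simp only [Finset.mem_filter, Finset.mem_range, Nat.even_iff] at hm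
      omega
    · intro k hk
      simp only [Finset.mem_filter, Finset.mem_range, Nat.even_iff] at hk
      obtain ⟨hkp, hki, hkj, hkev⟩ := hk
      set m := (i + k)/2 with hm
      have h2m : 2*m = i + k := by omega
      have hmi : m ≤ i := by omega
      have hmn : m ≤ n := by omega
      have e3 : m - (i - m) = k := by omega
      have e4 : i - m ≤ m := by omega
      have hc1 : k ≤ i ∧ Even (i - k) := ⟨hki, Nat.even_iff.mpr hkev⟩
      have hc2 : k ≤ j ∧ Even (j - k) := ⟨hkj, Nat.even_iff.mpr (by omega)⟩
      simp only [hF, hG, Bfun, if_pos hc1, if_pos hc2, if_pos hmi]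
      rw [Nat.cast_choose ℝ hmn, Nat.cast_choose ℝ e4, e3]
      have e1 : i - m = (i - k)/2 := by omega
      have e2 : n - m = (j - k)/2 := by omega
      rw [e1, e2]
      have n1 := hfactne k
      have n2 := hfactne ((i-k)/2)
      have n3 := hfactne ((j-k)/2)
      have n4 := hfactne m
      have n5 := hfactne n
      field_simp
  have hchoose : (((2*n).choose i : ℝ)) = ((2*n).factorial : ℝ) /
      (i.factorial * j.factorial) := by
    have h2 : 2*n - i = j := by omega
    rw [Nat.cast_choose ℝ (by omega : i ≤ 2*n), h2]
  calc ∑ k ∈ Finset.range p, F k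
      = ∑ m ∈ (Finset.range (n+1)).filter (fun m => m ≤ i ∧ i ≤ 2*m),
          ((i.factorial : ℝ) * j.factorial / n.factorial) * G m := by
        rw [← hL, hbij]
    _ = ((i.factorial : ℝ) * j.factorial / n.factorial) *
          ∑ m ∈ (Finset.range (n+1)).filter (fun m => m ≤ i ∧ i ≤ 2*m), G m := by
        rw [Finset.mul_sum]
    _ = ((i.factorial : ℝ) * j.factorial / n.factorial) * ((2*n).choose i : ℝ) := by
        rw [hR, ← coeff_key]
    _ = ((2*n).factorial : ℝ) / n.factorial := by
        rw [hchoose]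
        field_simp


lemma keysum_odd (p i j : ℕ) (hij : (i + j) % 2 = 1) :
    ∑ k ∈ Finset.range p, Bfun i k * ((k.factorial : ℝ) * 2^k) * Bfun j k = 0 := by
  refine Finset.sum_eq_zero fun k hk => ?_
  by_cases h1 : k ≤ i ∧ Even (i - k)
  · by_cases h2 : k ≤ j ∧ Even (j - k)
    · have := Nat.even_iff.mp h1.2
      have := Nat.even_iff.mp h2.2
      have := h1.1
      have := h2.1
      omega
    · simp [Bfun, h2]
  · simp [Bfun, h1]

lemma Bfun_diag (i : ℕ) : Bfun i i = 1 := by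
  have : ((i.factorial : ℝ)) ≠ 0 := Nat.cast_ne_zero.mpr (Nat.factorial_ne_zero _)
  simp [Bfun, Nat.sub_self, div_self, this]

lemma Bfun_zero {i k : ℕ} (h : i < k) : Bfun i k = 0 := by
  simp [Bfun]
  intro h'
  omega

open Matrix in
/-- `det_{0≤i,j<p}( (-1)^{(i+j)/2} H_{i+j}(0) ) = 2^{C(p,2)} Π_{j<p} j!`. -/
theorem stmt8 (p : ℕ) (hp : 0 < p) :
    Matrix.det (Matrix.of fun i j : Fin p =>
        (-1:ℝ)^(((i : ℕ)+(j : ℕ))/2) * hermiteH ((i : ℕ)+(j : ℕ)) 0) =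
      2^(p.choose 2) * ∏ j ∈ Finset.range p, (j.factorial : ℝ) := by
  classical
  set Bm : Matrix (Fin p) (Fin p) ℝ := Matrix.of (fun i k : Fin p => Bfun (i:ℕ) (k:ℕ))
    with hBm
  set D : Matrix (Fin p) (Fin p) ℝ :=
    Matrix.diagonal (fun k : Fin p => ((k:ℕ).factorial : ℝ) * 2^(k:ℕ)) with hD
  have hfact : (Matrix.of fun i j : Fin p =>
        (-1:ℝ)^(((i : ℕ)+(j : ℕ))/2) * hermiteH ((i : ℕ)+(j : ℕ)) 0)
      = Bm * D * Bmᵀ := by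
    ext i j
    have hmul : (Bm * D * Bmᵀ) i j
        = ∑ k ∈ Finset.range p,
            Bfun (i:ℕ) k * ((k.factorial : ℝ) * 2^k) * Bfun (j:ℕ) k := by
      rw [Matrix.mul_apply, ← Fin.sum_univ_eq_sum_range]
      refine Finset.sum_congr rfl fun k _ => ?_
      rw [Matrix.mul_diagonal, Matrix.transpose_apply]
      rfl
    rw [Matrix.of_apply, entry_eq, hmul]
    rcases Nat.even_or_odd ((i:ℕ)+(j:ℕ)) with he | ho
    · obtain ⟨n, hn⟩ := he
      have hn2 : (i:ℕ) + (j:ℕ) = 2*n := by omega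
      rw [keysum p i j n i.isLt j.isLt hn2, if_pos ⟨n, hn⟩, hn2,
        show 2*n/2 = n by omega]
    · rw [keysum_odd p i j (Nat.odd_iff.mp ho), if_neg (Nat.not_even_iff_odd.mpr ho)]
  rw [hfact, Matrix.det_mul, Matrix.det_mul, Matrix.det_transpose]
  have hdetB : Bm.det = 1 := by
    rw [Matrix.det_of_lowerTriangular Bm (fun a b hab => Bfun_zero hab)]
    simp [hBm, Bfun_diag]
  have hdetD : D.det = 2^(p.choose 2) * ∏ j ∈ Finset.range p, (j.factorial : ℝ) := by
    have h1 : ∏ i : Fin p, (((i:ℕ).factorial : ℝ) * 2^(i:ℕ))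
        = ∏ k ∈ Finset.range p, ((k.factorial : ℝ) * 2^k) :=
      Fin.prod_univ_eq_prod_range (fun k => ((k.factorial : ℝ) * 2^k)) p
    rw [hD, Matrix.det_diagonal, h1, Finset.prod_mul_distrib,
      Finset.prod_pow_eq_pow_sum, Finset.sum_range_id, ← Nat.choose_two_right, mul_comm]
  rw [hdetB, hdetD, one_mul, mul_one]
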